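/- Minimal number of messages equals rank (mathematical core of Proposition 1): Let T, p, q be natural numbers, and let K be a real matrix indexed by rows (Fin (T+1)) × (Fin p) and columns (Fin (T+1)) × (Fin q) that is block lower triangular in the time index, i.e., K ((t,a),(τ,b)) = 0 whenever τ > t. Call a natural number r 'causally achievable for K' if there exist a monotone function t : Fin r → Fin (T+1), a matrix D with columns indexed by Fin r, and a matrix E with rows indexed by Fin r, such that K = D * E, E (k,(τ,b)) = 0 whenever τ > t k, and D ((s,a),k) = 0 whenever t k > s. Then the rank of K is causally achievable for K, and every causally achievable r satisfies rank K ≤ r; in other words, rank K is the minimum of the set of causally achievable numbers. -/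

import Mathlib

/-- `r` is causally achievable for `K`: the controller `K` can be implemented with `r`
inter-agent messages via a causal encoder–decoder factorization. -/
def CausallyAchievable (T p q : ℕ)
    (K : Matrix (Fin (T + 1) × Fin p) (Fin (T + 1) × Fin q) ℝ) (r : ℕ) : Prop :=
  ∃ (t : Fin r → Fin (T + 1))
    (D : Matrix (Fin (T + 1) × Fin p) (Fin r) ℝ)
    (E : Matrix (Fin r) (Fin (T + 1) × Fin q) ℝ),
    Monotone t ∧
    K = D * E ∧
    (∀ (k : Fin r) (τ : Fin (T + 1)) (b : Fin q), t k < τ → E k (τ, b) = 0) ∧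
    (∀ (s : Fin (T + 1)) (a : Fin p) (k : Fin r), s < t k → D (s, a) k = 0)

open Set Submodule Module

section MMAux

variable {T p q : ℕ} (K : Matrix (Fin (T + 1) × Fin p) (Fin (T + 1) × Fin q) ℝ)

/-- column `j` of `K` as a vector. -/
def mmCol (j : Fin (T + 1) × Fin q) : (Fin (T + 1) × Fin p) → ℝ := fun i => K i j

/-- set of columns of `K` with time index `≥ T - m`. -/
def mmCm (m : ℕ) : Set ((Fin (T + 1) × Fin p) → ℝ) := mmCol K '' {j | T ≤ (j.1 : ℕ) + m}

/-- set of columns of `K` with time index `= m`. -/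
def mmColsE (m : ℕ) : Set ((Fin (T + 1) × Fin p) → ℝ) := mmCol K '' {j | (j.1 : ℕ) = m}

/-- invariant for the greedy causal basis construction. -/
def mmQ (m : ℕ) (s : Set ((Fin (T + 1) × Fin p) → ℝ)) : Prop :=
  LinearIndependent ℝ ((↑) : s → ((Fin (T + 1) × Fin p) → ℝ)) ∧
  (∀ v ∈ s, ∃ m' ≤ m, v ∈ mmColsE K (T - m')) ∧
  span ℝ s = span ℝ (mmCm K m) ∧
  ∀ m' ≤ m, span ℝ (mmCm K m') ≤ span ℝ {v | v ∈ s ∧ ∃ m'' ≤ m', v ∈ mmColsE K (T - m'')}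

lemma mmCm_zero : mmCm K 0 = mmColsE K T := by
  have h : {j : Fin (T + 1) × Fin q | T ≤ (j.1 : ℕ) + 0} = {j | (j.1 : ℕ) = T} := by
    ext j
    have := Fin.is_le j.1
    simp only [Set.mem_setOf_eq]
    omega
  rw [mmCm, mmColsE, h]

lemma mmCm_succ (m : ℕ) : mmCm K (m + 1) = mmCm K m ∪ mmColsE K (T - (m + 1)) := by
  have h : {j : Fin (T + 1) × Fin q | T ≤ (j.1 : ℕ) + (m + 1)} =
      {j | T ≤ (j.1 : ℕ) + m} ∪ {j | (j.1 : ℕ) = T - (m + 1)} := by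
    ext j
    simp only [Set.mem_setOf_eq, Set.mem_union]
    omega
  rw [mmCm, mmCm, mmColsE, h, Set.image_union]

lemma mm_exists : ∀ m, ∃ s, mmQ K m s := by
  intro m
  induction m with
  | zero =>
    obtain ⟨b, hbt, -, hspanle, hli⟩ :=
      exists_linearIndepOn_id_extension (linearIndepOn_empty ℝ id)
        (Set.empty_subset (mmCm K 0))
    have hspan : span ℝ b = span ℝ (mmCm K 0) :=
      le_antisymm (span_le.2 fun x hx => subset_span (hbt hx)) (span_le.2 hspanle)
    have hcols : ∀ v ∈ b, v ∈ mmColsE K (T - 0) := by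
      intro v hv
      have := mmCm_zero K ▸ hbt hv
      rwa [Nat.sub_zero]
    refine ⟨b, hli, ?_, hspan, ?_⟩
    · intro v hv
      exact ⟨0, le_rfl, hcols v hv⟩
    · intro m' hm'
      interval_cases m'
      rw [← hspan]
      exact span_mono fun v hv => ⟨hv, 0, le_rfl, hcols v hv⟩
  | succ m ih =>
    obtain ⟨s, hli, hmem, hspan, hle⟩ := ih
    obtain ⟨b, hbt, hsb, hspanle, hlib⟩ :=
      exists_linearIndepOn_id_extension hli
        (Set.subset_union_left (s := s) (t := mmColsE K (T - (m + 1))))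
    have hCmono : mmCm K m ⊆ mmCm K (m + 1) :=
      Set.image_mono fun j hj => by simp only [Set.mem_setOf_eq] at *; omega
    have hmemb : ∀ v ∈ b, ∃ m' ≤ m + 1, v ∈ mmColsE K (T - m') := by
      intro v hv
      rcases hbt hv with hv' | hv'
      · obtain ⟨m', hm', h⟩ := hmem v hv'
        exact ⟨m', le_trans hm' (Nat.le_succ m), h⟩
      · exact ⟨m + 1, le_rfl, hv'⟩
    have hspanb : span ℝ b = span ℝ (mmCm K (m + 1)) := by
      apply le_antisymm
      · apply span_le.2
        intro x hx
        rcases hbt hx with hx' | hx'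
        · exact span_mono hCmono (hspan ▸ subset_span hx')
        · exact subset_span (mmCm_succ K m ▸ Set.mem_union_right _ hx')
      · rw [mmCm_succ, span_union]
        apply sup_le
        · rw [← hspan]; exact span_mono hsb
        · exact span_le.2 fun x hx => hspanle (Or.inr hx)
    refine ⟨b, hlib, hmemb, hspanb, ?_⟩
    intro m' hm'
    rcases Nat.lt_or_ge m' (m + 1) with h | h
    · refine le_trans (hle m' (Nat.lt_succ_iff.mp h)) (span_mono ?_)
      rintro v ⟨hv, hw⟩
      exact ⟨hsb hv, hw⟩
    · have : m' = m + 1 := le_antisymm hm' h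
      subst this
      rw [← hspanb]
      exact span_mono fun v hv => ⟨hv, hmemb v hv⟩

end MMAux

/-- Minimal number of inter-agent messages equals the rank of the controller matrix
(mathematical core of Proposition 1). -/
theorem minimal_messages_eq_rank (T p q : ℕ)
    (K : Matrix (Fin (T + 1) × Fin p) (Fin (T + 1) × Fin q) ℝ)
    (hK : ∀ (t : Fin (T + 1)) (a : Fin p) (τ : Fin (T + 1)) (b : Fin q),
      t < τ → K (t, a) (τ, b) = 0) :
    CausallyAchievable T p q K K.rank ∧
    ∀ r : ℕ, CausallyAchievable T p q K r → K.rank ≤ r := by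
  classical
  constructor
  · -- achievability
    obtain ⟨s, hli, hmem, hspan, hle⟩ := mm_exists K T
    have hfin : s.Finite := hli.setFinite
    have hli' : LinearIndepOn ℝ id s := hli
    -- time assignment : the largest time index of a column equal to `v`
    set tass : ((Fin (T + 1) × Fin p) → ℝ) → ℕ := fun v =>
      if h : ∃ m, v ∈ mmColsE K (T - m) then T - Nat.find h else 0 with htass
    have htass_spec : ∀ v ∈ s, v ∈ mmColsE K (tass v) := by
      intro v hv
      obtain ⟨m', _, hm'⟩ := hmem v hv
      have hex : ∃ m, v ∈ mmColsE K (T - m) := ⟨m', hm'⟩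
      simp only [htass, dif_pos hex]
      exact Nat.find_spec hex
    have htass_ge : ∀ v, ∀ m'', v ∈ mmColsE K (T - m'') → T - m'' ≤ tass v := by
      intro v m'' h
      have hex : ∃ m, v ∈ mmColsE K (T - m) := ⟨m'', h⟩
      simp only [htass, dif_pos hex]
      have := Nat.find_min' hex h
      omega
    have htass_le : ∀ v, tass v ≤ T := by
      intro v
      simp only [htass]
      split <;> omega
    -- the sorted list
    set le : ((Fin (T + 1) × Fin p) → ℝ) → ((Fin (T + 1) × Fin p) → ℝ) → Bool :=
      fun a b => tass a ≤ tass b with hledef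
    set l := hfin.toFinset.toList.mergeSort le with hl
    have hperm : l.Perm hfin.toFinset.toList := List.mergeSort_perm _ le
    have hnodup : l.Nodup := hperm.nodup_iff.2 hfin.toFinset.nodup_toList
    have hmeml : ∀ v, v ∈ l ↔ v ∈ s := by
      intro v
      rw [hperm.mem_iff, Finset.mem_toList, Set.Finite.mem_toFinset]
    have hsorted : l.Pairwise (fun a b => le a b) := by
      apply List.pairwise_mergeSort
      · intro a b c hab hbc
        simp only [hledef, decide_eq_true_eq] at *
        omega
      · intro a b
        simp only [hledef, Bool.or_eq_true, decide_eq_true_eq]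
        omega
    set r := l.length with hr
    have hget_mem : ∀ k : Fin r, l.get k ∈ s := fun k => (hmeml _).1 (l.get_mem k)
    -- the basis
    have hsub : s ⊆ hli'.extend (Set.subset_univ s) := hli'.subset_extend _
    set B := Basis.extend hli' with hB
    have hextli : LinearIndependent ℝ
        ((↑) : (hli'.extend (Set.subset_univ s)) → ((Fin (T + 1) × Fin p) → ℝ)) := by
      have := B.linearIndependent
      rwa [Basis.coe_extend] at this
    have hextfin : (hli'.extend (Set.subset_univ s)).Finite := hextli.setFinite
    haveI : Fintype (hli'.extend (Set.subset_univ s)) := hextfin.fintype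
    -- columns belong to the causal spans
    have hcolmem : ∀ j : Fin (T + 1) × Fin q,
        mmCol K j ∈ span ℝ {v | v ∈ s ∧ (j.1 : ℕ) ≤ tass v} := by
      intro j
      have hjle : (j.1 : ℕ) ≤ T := Fin.is_le j.1
      have h1 : mmCol K j ∈ mmCm K (T - (j.1 : ℕ)) :=
        ⟨j, show T ≤ (j.1 : ℕ) + (T - (j.1 : ℕ)) by omega, rfl⟩
      have h2 := hle (T - (j.1 : ℕ)) (Nat.sub_le T _) (subset_span h1)
      refine span_mono ?_ h2
      rintro v ⟨hv, m'', hm'', hcol⟩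
      have := htass_ge v m'' hcol
      exact ⟨hv, by omega⟩
    -- coordinates vanish outside the causal set
    have hrepr_supp : ∀ (j : Fin (T + 1) × Fin q)
        (x : hli'.extend (Set.subset_univ s)),
        B.repr (mmCol K j) x ≠ 0 → (↑x ∈ s ∧ (j.1 : ℕ) ≤ tass ↑x) := by
      intro j x hx
      have himg : B '' {y : hli'.extend (Set.subset_univ s) |
            ↑y ∈ s ∧ (j.1 : ℕ) ≤ tass ↑y} =
          {v | v ∈ s ∧ (j.1 : ℕ) ≤ tass v} := by
        ext v
        constructor
        · rintro ⟨y, hy, rfl⟩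
          rw [Basis.extend_apply_self]
          exact hy
        · rintro ⟨hv, hvt⟩
          exact ⟨⟨v, hsub hv⟩, ⟨hv, hvt⟩, Basis.extend_apply_self _ _⟩
      have hmem' : mmCol K j ∈ span ℝ
          (B '' {y : hli'.extend (Set.subset_univ s) |
            ↑y ∈ s ∧ (j.1 : ℕ) ≤ tass ↑y}) := by
        rw [himg]; exact hcolmem j
      have hsupp := B.mem_span_image.mp hmem'
      have : x ∈ (B.repr (mmCol K j)).support := Finsupp.mem_support_iff.mpr hx
      exact hsupp this
    have hach : CausallyAchievable T p q K r := by
      refine ⟨fun k => ⟨tass (l.get k), Nat.lt_succ_of_le (htass_le _)⟩,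
        fun i k => l.get k i,
        fun k j => B.repr (mmCol K j) ⟨l.get k, hsub (hget_mem k)⟩,
        ?_, ?_, ?_, ?_⟩
      · -- monotone
        intro k k' hk
        rcases eq_or_lt_of_le hk with h | h
        · exact le_of_eq (by rw [h])
        · have := List.Pairwise.rel_get_of_lt hsorted h
          simp only [hledef, decide_eq_true_eq] at this
          exact this
      · -- K = D * E
        ext i j
        have hsum := B.sum_repr (mmCol K j)
        have hKij : K i j = ∑ x : hli'.extend (Set.subset_univ s),
            B.repr (mmCol K j) x * B x i := by
          have := congrFun hsum i
          rw [Finset.sum_apply] at this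
          simp only [Pi.smul_apply, smul_eq_mul] at this
          exact this.symm
        change K i j = ∑ k, l.get k i * B.repr (mmCol K j) ⟨l.get k, hsub (hget_mem k)⟩
        rw [hKij]
        have hfilt : ∑ x : hli'.extend (Set.subset_univ s),
            B.repr (mmCol K j) x * B x i =
            ∑ x ∈ Finset.univ.filter
              (fun x : hli'.extend (Set.subset_univ s) =>
                (x : (Fin (T + 1) × Fin p) → ℝ) ∈ s),
              B.repr (mmCol K j) x * B x i := by
          symm
          apply Finset.sum_filter_of_ne
          intro x _ hx
          have : B.repr (mmCol K j) x ≠ 0 := by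
            intro h; exact hx (by rw [h, zero_mul])
          exact (hrepr_supp j x this).1
        rw [hfilt]
        symm
        apply Finset.sum_bij (i := fun (k : Fin r) _ =>
          (⟨l.get k, hsub (hget_mem k)⟩ : hli'.extend (Set.subset_univ s)))
        · intro k _
          simp only [Finset.mem_filter, Finset.mem_univ, true_and]
          exact hget_mem k
        · intro k _ k' _ h
          exact (List.nodup_iff_injective_get.mp hnodup) (Subtype.ext_iff.mp h)
        · intro x hx
          simp only [Finset.mem_filter, Finset.mem_univ, true_and] at hx
          obtain ⟨k, hk⟩ := List.mem_iff_get.mp ((hmeml _).2 hx)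
          exact ⟨k, Finset.mem_univ k, Subtype.ext hk⟩
        · intro k _
          rw [mul_comm, Basis.extend_apply_self]
      · -- E causal
        intro k τ b hlt
        by_contra h
        have h1 := (hrepr_supp (τ, b) ⟨l.get k, hsub (hget_mem k)⟩ h).2
        have h2 : (τ : ℕ) ≤ tass (l.get k) := h1
        have hlt' : tass (l.get k) < (τ : ℕ) := hlt
        omega
      · -- D causal
        intro i a k hlt
        have hcol := htass_spec _ (hget_mem k)
        obtain ⟨j, hj, hcolj⟩ := hcol
        simp only [Set.mem_setOf_eq] at hj
        have hlt' : (i : ℕ) < tass (l.get k) := hlt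
        have hij : (i : Fin (T + 1)) < j.1 := by
          rw [Fin.lt_def]; omega
        have hz := hK i a j.1 j.2 hij
        show l.get k (i, a) = 0
        rw [← hcolj]
        exact hz
    -- r = rank
    have hrank : K.rank = r := by
      rw [Matrix.rank_eq_finrank_span_cols]
      have hrange : Set.range K.col = mmCm K T := by
        ext v
        constructor
        · rintro ⟨j, rfl⟩
          exact ⟨j, show T ≤ (j.1 : ℕ) + T from Nat.le_add_left T _, rfl⟩
        · rintro ⟨j, -, rfl⟩
          exact ⟨j, rfl⟩
      rw [hrange, ← hspan]
      haveI : Fintype s := hfin.fintype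
      rw [finrank_span_set_eq_card hli, hr, hperm.length_eq, Finset.length_toList,
        Set.Finite.card_toFinset, Set.toFinset_card]
    rw [hrank]
    exact hach
  · -- lower bound
    rintro r ⟨t, D, E, -, hKDE, -, -⟩
    rw [hKDE]
    exact le_trans (Matrix.rank_mul_le_right D E)
      (le_trans E.rank_le_card_height (Fintype.card_fin r).le)
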